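/- In the Strings and Coins game played on a path graph (a tree), the first player can capture every vertex; more generally, on any finite tree (every vertex attached to at least one edge), the first player wins by capturing all vertices. -/

import Mathlib

/-- A position in Strings and Coins: a finite multigraph, with vertex set `verts`
and a multiset of (possibly loop) edges, each given as an ordered pair. -/
structure SCPos (V : Type) where
  verts : Finset V
  edges : Multiset (V × V)

variable {V : Type} [DecidableEq V]

/-- Number of edges incident to `v` (each edge, including a loop, counted once);
only being zero or nonzero matters for captures. -/
def SCPos.deg (p : SCPos V) (v : V) : ℕ :=
  (p.edges.filter (fun f => f.1 = v ∨ f.2 = v)).card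

/-- Degree of `v`, where a loop at `v` contributes 2. -/
def SCPos.degree (p : SCPos V) (v : V) : ℕ :=
  (p.edges.map (fun e => (if e.1 = v then 1 else 0) + (if e.2 = v then 1 else 0))).sum

/-- The position obtained by removing one copy of edge `e`. -/
def SCPos.remove (p : SCPos V) (e : V × V) : SCPos V :=
  ⟨p.verts, p.edges.erase e⟩

/-- The number of vertices captured by removing edge `e` from `p`:
endpoints of `e` whose degree drops to zero. -/
def SCPos.caps (p : SCPos V) (e : V × V) : ℕ :=
  (p.verts.filter (fun v => (v = e.1 ∨ v = e.2) ∧ (p.remove e).deg v = 0)).card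

/-- Optimal score `(mover's points, opponent's points)` of Strings and Coins,
under play where each player maximizes their own number of captured vertices.
A player who captures at least one vertex moves again. -/
noncomputable def SCPos.score (p : SCPos V) : ℕ × ℕ :=
  if h : p.edges = 0 then (0, 0)
  else
    (p.edges.toList.attach.map (fun ⟨e, he⟩ =>
      let s := (p.remove e).score
      let c := p.caps e
      if c = 0 then (s.2, s.1) else (s.1 + c, s.2))).foldl
      (fun best o => if best.1 ≤ o.1 then o else best) (0, 0)
termination_by p.edges.card
decreasing_by
  exact Multiset.card_erase_lt_of_mem (Multiset.mem_toList.mp he)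

/-- The cycle graph `C_n` as a Strings and Coins position. -/
def cyclePos (n : ℕ) : SCPos ℕ :=
  ⟨Finset.range n, ((List.range n).map (fun i => (i, (i + 1) % n)) : List (ℕ × ℕ))⟩

/-- The friendship graph `F_n`: `n` triangles sharing the common vertex `0`. -/
def friendshipPos (n : ℕ) : SCPos ℕ :=
  ⟨Finset.range (2 * n + 1),
   (((List.range n).flatMap fun i =>
      [(0, 2 * i + 1), (0, 2 * i + 2), (2 * i + 1, 2 * i + 2)]) : List (ℕ × ℕ))⟩

/-- The pinwheel graph `PW_n`: `n` copies of `C_4` sharing the common vertex `0`. -/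
def pinwheelPos (n : ℕ) : SCPos ℕ :=
  ⟨Finset.range (3 * n + 1),
   (((List.range n).flatMap fun i =>
      [(0, 3 * i + 1), (3 * i + 1, 3 * i + 2), (3 * i + 2, 3 * i + 3), (3 * i + 3, 0)]) :
     List (ℕ × ℕ))⟩

/-- The loopy star `L_n`: center `0`, outer vertices `1, …, n`, each joined to the
center by an edge and carrying one loop. -/
def loopyStarPos (n : ℕ) : SCPos ℕ :=
  ⟨Finset.range (n + 1),
   (((List.range n).flatMap fun i => [(0, i + 1), (i + 1, i + 1)]) : List (ℕ × ℕ))⟩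

/-- The double loopy star `L(n,2)`: center `0`, outer vertices `1, …, n`, each joined
to the center by an edge and carrying two loops. -/
def doubleLoopyStarPos (n : ℕ) : SCPos ℕ :=
  ⟨Finset.range (n + 1),
   (((List.range n).flatMap fun i => [(0, i + 1), (i + 1, i + 1), (i + 1, i + 1)]) :
     List (ℕ × ℕ))⟩

/-- The complete bipartite graph `K(1, b)` (a star with `b` leaves). -/
def starPos (b : ℕ) : SCPos ℕ :=
  ⟨Finset.range (b + 1), (((List.range b).map fun i => (0, i + 1)) : List (ℕ × ℕ))⟩

/-- The complete bipartite graph `K(2, b)`: part `{0, 1}` and part `{2, …, b+1}`. -/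
def k2bPos (b : ℕ) : SCPos ℕ :=
  ⟨Finset.range (b + 2),
   (((List.range b).flatMap fun j => [(0, j + 2), (1, j + 2)]) : List (ℕ × ℕ))⟩

/-- The balloon path `BP_n`: a path on vertices `0, …, n-1` with one loop at each vertex. -/
def balloonPathPos (n : ℕ) : SCPos ℕ :=
  ⟨Finset.range n,
   ((((List.range (n - 1)).map fun i => (i, i + 1)) ++
     ((List.range n).map fun i => (i, i))) : List (ℕ × ℕ))⟩

/-- The loopy cycle `C_(n,1)`: the cycle `C_n` with one extra loop at vertex `0`. -/
def loopyCyclePos (n : ℕ) : SCPos ℕ :=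
  ⟨Finset.range n, (0, 0) ::ₘ (cyclePos n).edges⟩

/-- The Strings and Coins position of a finite simple graph: all vertices,
and one (arbitrarily oriented) edge for each edge of the graph. -/
noncomputable def posOfGraph {W : Type} [Fintype W] [DecidableEq W]
    (G : SimpleGraph W) [DecidableRel G.Adj] : SCPos W :=
  ⟨Finset.univ, G.edgeFinset.val.map Quot.out⟩


namespace SCT
open SimpleGraph

inductive AllCap : SCPos V → Prop
  | nil (p : SCPos V) : p.edges = 0 → AllCap p
  | step (p : SCPos V) (e : V × V) : e ∈ p.edges → 1 ≤ p.caps e →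
      AllCap (p.remove e) → AllCap p

omit [DecidableEq V] in
lemma quotOut_injective : Function.Injective (Quot.out : Sym2 V → V × V) :=
  fun a b h => by rw [← Quot.out_eq a, ← Quot.out_eq b, h]

omit [DecidableEq V] in
lemma out_inc_iff (s : Sym2 V) (v : V) :
    ((Quot.out s).1 = v ∨ (Quot.out s).2 = v) ↔ v ∈ s := by
  constructor
  · rintro (h | h)
    · exact h ▸ Sym2.out_fst_mem s
    · exact h ▸ Sym2.out_snd_mem s
  · intro hv
    have hmk : s((Quot.out s).1, (Quot.out s).2) = s := Quot.out_eq s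
    rw [← hmk] at hv
    rcases Sym2.mem_iff.1 hv with h | h
    · exact Or.inl h.symm
    · exact Or.inr h.symm

lemma card_filter_erase {α : Type*} [DecidableEq α] (s : Multiset α) (e : α) (he : e ∈ s)
    (q : α → Prop) [DecidablePred q] :
    ((s.erase e).filter q).card = (s.filter q).card - (if q e then 1 else 0) := by
  obtain ⟨t, rfl⟩ := Multiset.exists_cons_of_mem he
  rw [Multiset.erase_cons_head, Multiset.filter_cons]
  split <;> simp_all

/-- The number of non-isolated vertices of a position. -/
def N (p : SCPos V) : ℕ := (p.verts.filter fun v => p.deg v ≠ 0).card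

lemma deg_remove_le (p : SCPos V) (e : V × V) (v : V) :
    (p.remove e).deg v ≤ p.deg v :=
  Multiset.card_le_card (Multiset.filter_le_filter _ (Multiset.erase_le _ _))

lemma deg_remove (p : SCPos V) {e : V × V} (he : e ∈ p.edges) (v : V) :
    (p.remove e).deg v = p.deg v - (if e.1 = v ∨ e.2 = v then 1 else 0) :=
  card_filter_erase _ _ he _

lemma deg_ne_zero_of_inc (p : SCPos V) {e : V × V} (he : e ∈ p.edges) {v : V}
    (hv : e.1 = v ∨ e.2 = v) : p.deg v ≠ 0 := by
  have : e ∈ p.edges.filter (fun f => f.1 = v ∨ f.2 = v) := Multiset.mem_filter.2 ⟨he, hv⟩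
  simp only [SCPos.deg]
  exact fun h => by simp [Multiset.card_eq_zero.mp h] at this

lemma N_remove (p : SCPos V) {e : V × V} (he : e ∈ p.edges) :
    N (p.remove e) + p.caps e = N p := by
  have hsplit : p.verts.filter (fun v => p.deg v ≠ 0)
      = (p.verts.filter fun v => (p.remove e).deg v ≠ 0)
        ∪ (p.verts.filter fun v => (v = e.1 ∨ v = e.2) ∧ (p.remove e).deg v = 0) := by
    ext v
    simp only [Finset.mem_union, Finset.mem_filter]
    constructor
    · rintro ⟨hv, hdeg⟩
      by_cases h0 : (p.remove e).deg v = 0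
      · refine Or.inr ⟨hv, ?_, h0⟩
        by_contra hinc
        rw [deg_remove p he] at h0
        have : ¬ (e.1 = v ∨ e.2 = v) := by
          rintro (h | h) <;> exact hinc (by tauto)
        simp [this] at h0
        exact hdeg h0
      · exact Or.inl ⟨hv, h0⟩
    · rintro (⟨hv, h⟩ | ⟨hv, hinc, h0⟩)
      · exact ⟨hv, fun h0 => h (Nat.le_antisymm (h0 ▸ deg_remove_le p e v) (Nat.zero_le _))⟩
      · exact ⟨hv, deg_ne_zero_of_inc p he (by tauto)⟩
  have hdisj : Disjoint (p.verts.filter fun v => (p.remove e).deg v ≠ 0)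
      (p.verts.filter fun v => (v = e.1 ∨ v = e.2) ∧ (p.remove e).deg v = 0) := by
    rw [Finset.disjoint_left]
    intro v h1 h2
    exact (Finset.mem_filter.1 h1).2 (Finset.mem_filter.1 h2).2.2
  have hcard := Finset.card_union_of_disjoint hdisj
  show (Finset.filter (fun v => (p.remove e).deg v ≠ 0) p.verts).card + p.caps e = N p
  rw [N, hsplit, hcard]
  rfl

/-- The max-selection function used in `SCPos.score`. -/
def scmax (best o : ℕ × ℕ) : ℕ × ℕ := if best.1 ≤ o.1 then o else best

lemma foldl_mem : ∀ (l : List (ℕ × ℕ)) (init : ℕ × ℕ),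
    l.foldl scmax init = init ∨ l.foldl scmax init ∈ l := by
  intro l
  induction l with
  | nil => simp
  | cons b l ih =>
    intro init
    rw [List.foldl_cons]
    rcases ih (scmax init b) with h | h
    · rw [h]; unfold scmax; split <;> simp
    · right; exact List.mem_cons_of_mem _ h

lemma le_scmax_left (a b : ℕ × ℕ) : a.1 ≤ (scmax a b).1 := by
  unfold scmax; split <;> omega

lemma le_scmax_right (a b : ℕ × ℕ) : b.1 ≤ (scmax a b).1 := by
  unfold scmax; split <;> omega

lemma init_le_foldl : ∀ (l : List (ℕ × ℕ)) (init : ℕ × ℕ),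
    init.1 ≤ (l.foldl scmax init).1 := by
  intro l
  induction l with
  | nil => simp
  | cons b l ih =>
    intro init
    rw [List.foldl_cons]
    exact le_trans (le_scmax_left init b) (ih (scmax init b))

lemma mem_le_foldl : ∀ (l : List (ℕ × ℕ)) (init o : ℕ × ℕ), o ∈ l →
    o.1 ≤ (l.foldl scmax init).1 := by
  intro l
  induction l with
  | nil => simp
  | cons b l ih =>
    intro init o ho
    rw [List.foldl_cons]
    rcases List.mem_cons.1 ho with rfl | h
    · exact le_trans (le_scmax_right init o) (init_le_foldl l (scmax init o))
    · exact ih _ o h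

/-- The list of move outcomes considered in `SCPos.score`. -/
noncomputable def opts (p : SCPos V) : List (ℕ × ℕ) :=
  p.edges.toList.attach.map (fun x =>
    if p.caps x.1 = 0 then ((p.remove x.1).score.2, (p.remove x.1).score.1)
    else ((p.remove x.1).score.1 + p.caps x.1, (p.remove x.1).score.2))

lemma score_eq_foldl {p : SCPos V} (h : p.edges ≠ 0) :
    p.score = (opts p).foldl scmax (0, 0) := by
  rw [SCPos.score]
  simp only [h, dite_false]
  rfl

lemma mem_opts {p : SCPos V} {m : ℕ × ℕ} (hm : m ∈ opts p) :
    ∃ e ∈ p.edges,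
      m = if p.caps e = 0 then ((p.remove e).score.2, (p.remove e).score.1)
          else ((p.remove e).score.1 + p.caps e, (p.remove e).score.2) := by
  obtain ⟨x, hx, rfl⟩ := List.mem_map.1 hm
  exact ⟨x.1, Multiset.mem_toList.mp x.2, rfl⟩

lemma opts_mem {p : SCPos V} {e : V × V} (he : e ∈ p.edges) :
    (if p.caps e = 0 then ((p.remove e).score.2, (p.remove e).score.1)
      else ((p.remove e).score.1 + p.caps e, (p.remove e).score.2)) ∈ opts p := by
  exact List.mem_map.2 ⟨⟨e, Multiset.mem_toList.mpr he⟩, List.mem_attach _ _, rfl⟩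

theorem score_sum_le (p : SCPos V) : p.score.1 + p.score.2 ≤ N p := by
  by_cases h : p.edges = 0
  · rw [SCPos.score]; simp [h]
  · rw [score_eq_foldl h]
    rcases foldl_mem (opts p) (0, 0) with hm | hm
    · rw [hm]; simp
    · obtain ⟨e, he, hval⟩ := mem_opts hm
      have ih := score_sum_le (p.remove e)
      have hN := N_remove p he
      rw [hval]
      split <;> simp <;> omega
termination_by p.edges.card
decreasing_by
  exact Multiset.card_erase_lt_of_mem he

theorem AllCap.score_eq {p : SCPos V} (h : AllCap p) : p.score = (N p, 0) := by
  induction h with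
  | nil p h0 =>
    rw [SCPos.score]
    simp [h0, N, SCPos.deg]
  | step p e he hc hac ih =>
    have hne : p.edges ≠ 0 := fun h0 => by simp [h0] at he
    have hc0 : ¬ (p.caps e = 0) := by omega
    have hgood : ((p.remove e).score.1 + p.caps e, (p.remove e).score.2) ∈ opts p := by
      have := opts_mem (p := p) he
      rw [if_neg hc0] at this
      exact this
    rw [ih] at hgood
    have hval : ((N (p.remove e), 0) : ℕ × ℕ).1 + p.caps e = N p := N_remove p he
    simp only at hval hgood
    rw [score_eq_foldl hne]
    set m := (opts p).foldl scmax (0, 0) with hmdef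
    have h1 : N p ≤ m.1 := by
      have := mem_le_foldl (opts p) (0, 0) _ hgood
      simpa [hval] using this
    have h2 : m.1 + m.2 ≤ N p := by
      rcases foldl_mem (opts p) (0, 0) with hm | hm
      · rw [← hmdef] at hm; rw [hm]; simp
      · rw [← hmdef] at hm
        obtain ⟨f, hf, hvalf⟩ := mem_opts hm
        have ihf := score_sum_le (p.remove f)
        have hNf := N_remove p hf
        rw [hvalf]
        split <;> simp <;> omega
    have hm1 : m.1 = N p := le_antisymm (by omega) h1
    have : m = (N p, 0) := Prod.ext hm1 (by omega)
    rw [this]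

lemma deg_map_eq (E : Finset (Sym2 V)) (verts : Finset V) (v : V) :
    (SCPos.mk verts (E.val.map Quot.out)).deg v = (E.filter (fun s => v ∈ s)).card := by
  show ((E.val.map Quot.out).filter (fun f => f.1 = v ∨ f.2 = v)).card = _
  rw [Multiset.filter_map]
  rw [Multiset.card_map]
  have hcg : Multiset.filter ((fun f => f.1 = v ∨ f.2 = v) ∘ Quot.out) E.val
      = Multiset.filter (fun s => v ∈ s) E.val := by
    refine Multiset.filter_congr (fun s _ => ?_)
    exact out_inc_iff s v
  rw [hcg]
  rfl

lemma exists_leaf [Fintype V] {G : SimpleGraph V}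
    (hG : G.IsAcyclic) (hne : ∃ a b, G.Adj a b) :
    ∃ v w, G.Adj v w ∧ ∀ x, G.Adj v x → x = w := by
  classical
  let S : Set ℕ := {n | ∃ (u v : V) (p : G.Walk u v), p.IsPath ∧ p.length = n}
  have h1S : (1 : ℕ) ∈ S := by
    obtain ⟨a, b, h⟩ := hne
    exact ⟨a, b, Walk.cons h Walk.nil, by simp [h.ne], rfl⟩
  have hbdd : BddAbove S := by
    refine ⟨Fintype.card V, ?_⟩
    rintro n ⟨u, v, p, hp, rfl⟩
    exact le_of_lt hp.length_lt
  obtain ⟨u, v, p, hp, hlen⟩ := Nat.sSup_mem ⟨1, h1S⟩ hbdd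
  have h1 : 1 ≤ p.length := by
    rw [hlen]; exact le_csSup hbdd h1S
  have hadj : G.Adj u (p.getVert 1) := by
    have := p.adj_getVert_succ (by omega : 0 < p.length)
    simpa using this
  refine ⟨u, p.getVert 1, hadj, ?_⟩
  intro x hx
  by_cases hxs : x ∈ p.support
  · have hq : (p.takeUntil x hxs).IsPath := hp.takeUntil hxs
    have hedge : (Walk.cons hx Walk.nil : G.Walk u x).IsPath := by simp [hx.ne]
    have huniq := hG.path_unique ⟨p.takeUntil x hxs, hq⟩ ⟨Walk.cons hx Walk.nil, hedge⟩
    have heq : p.takeUntil x hxs = Walk.cons hx Walk.nil := congrArg Subtype.val huniq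
    have hspec := p.take_spec hxs
    rw [heq] at hspec
    have hgv : p.getVert 1 = ((Walk.cons hx Walk.nil).append (p.dropUntil x hxs)).getVert 1 := by
      rw [hspec]
    rw [Walk.cons_append, Walk.getVert_cons_succ, Walk.nil_append, Walk.getVert_zero] at hgv
    exact hgv.symm
  · exfalso
    have hmem : p.length + 1 ∈ S :=
      ⟨x, v, Walk.cons hx.symm p, (Walk.cons_isPath_iff _ _).2 ⟨hp, hxs⟩, by simp⟩
    have := le_csSup hbdd hmem
    omega

theorem allCap_forest [Fintype V] (E : Finset (Sym2 V))
    (hex : ∃ H : SimpleGraph V, H.IsAcyclic ∧ H.edgeSet = ↑E) :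
    AllCap (⟨Finset.univ, E.val.map Quot.out⟩ : SCPos V) := by
  classical
  induction E using Finset.strongInduction with
  | _ E ih =>
  obtain ⟨H, hac, hE⟩ := hex
  by_cases h0 : E = ∅
  · exact AllCap.nil _ (by simp [h0])
  · have hne : ∃ a b, H.Adj a b := by
      obtain ⟨s, hs⟩ := Finset.nonempty_iff_ne_empty.2 h0
      have hs' : s ∈ H.edgeSet := by rw [hE]; exact_mod_cast hs
      induction s using Sym2.ind with
      | _ a b => exact ⟨a, b, hs'⟩
    obtain ⟨u, w, hadj, huniq⟩ := exists_leaf hac hne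
    set p : SCPos V := ⟨Finset.univ, E.val.map Quot.out⟩ with hpdef
    set s0 : Sym2 V := s(u, w) with hs0def
    have hs0E : s0 ∈ E := by
      have : s0 ∈ H.edgeSet := hadj
      rw [hE] at this; exact_mod_cast this
    set e0 : V × V := Quot.out s0 with he0def
    have he0 : e0 ∈ p.edges := Multiset.mem_map_of_mem _ hs0E
    have hfilter : E.filter (fun s => u ∈ s) = {s0} := by
      ext s
      simp only [Finset.mem_filter, Finset.mem_singleton]
      constructor
      · rintro ⟨hsE, hu⟩
        obtain ⟨y, rfl⟩ := Sym2.mem_iff_exists.1 hu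
        have : H.Adj u y := by
          have : s(u, y) ∈ H.edgeSet := by rw [hE]; exact_mod_cast hsE
          exact this
        rw [huniq y this]
      · rintro rfl
        exact ⟨hs0E, by rw [hs0def]; exact Sym2.mem_mk_left u w⟩
    have hdegu : p.deg u = 1 := by
      rw [hpdef, deg_map_eq, hfilter]
      simp
    have hinc : e0.1 = u ∨ e0.2 = u := by
      rw [he0def, out_inc_iff]
      exact Sym2.mem_mk_left u w
    have hdegru : (p.remove e0).deg u = 0 := by
      have := card_filter_erase p.edges e0 he0 (fun f => f.1 = u ∨ f.2 = u)
      show ((p.edges.erase e0).filter (fun f => f.1 = u ∨ f.2 = u)).card = 0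
      rw [this, if_pos hinc]
      have : (p.edges.filter (fun f => f.1 = u ∨ f.2 = u)).card = p.deg u := rfl
      omega
    have hcaps : 1 ≤ p.caps e0 := by
      have hu : u ∈ p.verts.filter
          (fun v => (v = e0.1 ∨ v = e0.2) ∧ (p.remove e0).deg v = 0) := by
        refine Finset.mem_filter.2 ⟨Finset.mem_univ u, ?_, hdegru⟩
        rcases hinc with h | h
        · exact Or.inl h.symm
        · exact Or.inr h.symm
      exact Finset.card_pos.2 ⟨u, hu⟩
    have hrec : AllCap (p.remove e0) := by
      have hedges : p.edges.erase e0 = (E.erase s0).val.map Quot.out := by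
        rw [Finset.erase_val, Multiset.map_erase _ quotOut_injective]
      have heqpos : p.remove e0 = ⟨Finset.univ, (E.erase s0).val.map Quot.out⟩ := by
        show (⟨Finset.univ, p.edges.erase e0⟩ : SCPos V) = _
        rw [hedges]
      rw [heqpos]
      refine ih (E.erase s0) (Finset.erase_ssubset hs0E) ?_
      refine ⟨H.deleteEdges {s0}, ?_, ?_⟩
      · intro v c hc
        exact hac (c.mapLe (deleteEdges_le _)) (hc.mapLe _)
      · rw [edgeSet_deleteEdges, hE, Finset.coe_erase]
    exact AllCap.step p e0 he0 hcaps hrec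

end SCT

/-- On any finite tree (connected, acyclic, at least 2 vertices, so every vertex
meets an edge), the first player wins Strings and Coins by capturing every vertex. -/
theorem stmt0 {V : Type} [Fintype V] [DecidableEq V] (G : SimpleGraph V)
    [DecidableRel G.Adj] (hT : G.IsTree) (h2 : 2 ≤ Fintype.card V) :
    (posOfGraph G).score = (Fintype.card V, 0) := by
  classical
  have hAC : SCT.AllCap (posOfGraph G) :=
    SCT.allCap_forest G.edgeFinset ⟨G, hT.IsAcyclic, (G.coe_edgeFinset).symm⟩
  rw [SCT.AllCap.score_eq hAC]
  congr 1
  show (Finset.filter (fun v => (posOfGraph G).deg v ≠ 0) Finset.univ).card = Fintype.card V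
  rw [Finset.filter_true_of_mem, Finset.card_univ]
  intro v _
  obtain ⟨u, hu⟩ := Fintype.exists_ne_of_one_lt_card (by omega) v
  obtain ⟨q⟩ := hT.isConnected.preconnected v u
  have hlen : 0 < q.length := by
    rcases Nat.eq_zero_or_pos q.length with h | h
    · exact absurd (SimpleGraph.Walk.eq_of_length_eq_zero h).symm hu
    · exact h
  have hadj : G.Adj v (q.getVert 1) := by
    have := q.adj_getVert_succ hlen
    simpa using this
  have hsE : s(v, q.getVert 1) ∈ G.edgeFinset := SimpleGraph.mem_edgeFinset.2 hadj
  have hmem : Quot.out s(v, q.getVert 1) ∈ (posOfGraph G).edges :=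
    Multiset.mem_map_of_mem _ hsE
  refine SCT.deg_ne_zero_of_inc _ hmem ?_
  rw [SCT.out_inc_iff]
  exact Sym2.mem_mk_left _ _
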